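/- Fix L : ℕ, finite types C, C' and finite dimension types d, d'. Let Ω ⊆ C, let ρ : K × K × C → Matrix d d ℂ be a family with every ρ(k_A, k_B, c) positive semidefinite, and let N : (K × K × C → Matrix d d ℂ) →ₗ[ℂ] (K × K × (C × C') → Matrix d' d' ℂ) be a linear map satisfying: (a) N maps families with all entries positive semidefinite to families with all entries positive semidefinite; (b) N preserves total trace; (c) N ∘ R = R ∘ N, where R is the ideal map acting per value of the classical index; (d) N is transcript-local: for each c : C there is a linear map N_c : (K × K → Matrix d d ℂ) →ₗ[ℂ] (K × K × C' → Matrix d' d' ℂ) with (N σ)(k'_A, k'_B, (c, c')) = N_c (fun (k_A, k_B) => σ(k_A, k_B, c)) (k'_A, k'_B, c') for all σ; and (e) N is abort-forcing off Ω: for every σ with all entries positive semidefinite, every c ∉ Ω, every c' and every (k'_A, k'_B) ≠ (⊥, ⊥), (N σ)(k'_A, k'_B, (c, c')) = 0. Then ∑ over (k'_A, k'_B, c, c') of ‖(N ρ)(k'_A, k'_B, (c, c')) − (R (N ρ))(k'_A, k'_B, (c, c'))‖₁ ≤ ∑ over (k_A, k_B) and c ∈ Ω of ‖ρ(k_A,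 k_B, c) − (R ρ)(k_A, k_B, c)‖₁, and this in turn is at most ∑ over all (k_A, k_B, c) of ‖ρ(k_A, k_B, c) − (R ρ)(k_A, k_B, c)‖₁. -/

import Mathlib

open scoped ComplexOrder

/-- The key alphabet: keys of length `l ≤ L`, i.e. pairs of a length `l : Fin (L+1)`
and a bitstring of that length. -/
abbrev Key (L : ℕ) := Σ l : Fin (L+1), (Fin (l : ℕ) → Bool)

/-- The length of a key. -/
def lenKey {L : ℕ} (k : Key L) : Fin (L+1) := k.1

/-- The unique key of length `0` (the abort symbol `⊥`). -/
def botKey (L : ℕ) : Key L := ⟨0, fun _ => false⟩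

/-- The ideal-key weight `w(k_A, k_B)`: `2^(-len k_A)` if the lengths agree and
`k_A = k_B`, `0` if the lengths agree but `k_A ≠ k_B`, and
`2^(-(len k_A + len k_B))` if the lengths differ. -/
noncomputable def idealWt {L : ℕ} (kA kB : Key L) : ℝ :=
  if lenKey kA = lenKey kB then
    (if kA = kB then (2:ℝ) ^ (-((lenKey kA : ℕ) : ℤ)) else 0)
  else (2:ℝ) ^ (-(((lenKey kA : ℕ) : ℤ) + ((lenKey kB : ℕ) : ℤ)))

/-- The ideal map `R`, acting per value of the additional classical index `c`:
it replaces the key registers by ideal keys, weighting by `idealWt` and summing the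
input state over all key pairs with the same pair of lengths. -/
noncomputable def idealMap {L : ℕ} {C d : Type*}
    (ρ : Key L × Key L × C → Matrix d d ℂ) : Key L × Key L × C → Matrix d d ℂ :=
  fun p => idealWt p.1 p.2.1 •
    ∑ q : Key L × Key L,
      if lenKey q.1 = lenKey p.1 ∧ lenKey q.2 = lenKey p.2.1
        then ρ (q.1, q.2, p.2.2) else 0

/-- The trace norm `‖A‖₁` of a complex matrix `A`: the trace of the positive
semidefinite square root of `Aᴴ * A`. -/
noncomputable def traceNorm {n : Type*} [Fintype n] [DecidableEq n] (A : Matrix n n ℂ) : ℝ :=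
  ((Matrix.posSemidef_conjTranspose_mul_self A).1.eigenvectorUnitary.1 *
    Matrix.diagonal ((fun x : ℝ => (x : ℂ)) ∘ Real.sqrt ∘ (Matrix.posSemidef_conjTranspose_mul_self A).1.eigenvalues) *
    (star (Matrix.posSemidef_conjTranspose_mul_self A).1.eigenvectorUnitary : Matrix n n ℂ)).trace.re

open scoped MatrixOrder in
lemma traceNorm_eq_trace_sqrt {n : Type*} [Fintype n] [DecidableEq n] (A : Matrix n n ℂ) :
    traceNorm A = (CFC.sqrt (A.conjTranspose * A)).trace.re := by
  rw [CFC.sqrt_eq_real_sqrt _ (Matrix.posSemidef_conjTranspose_mul_self A).nonneg,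
    cfcₙ_eq_cfc (hf := Real.continuous_sqrt.continuousOn) (hf0 := Real.sqrt_zero), (Matrix.posSemidef_conjTranspose_mul_self A).1.cfc_eq]
  rfl

section MatrixHelpers
open Matrix

variable {n : Type*} [Fintype n] [DecidableEq n]

lemma psd_diag_nonneg {M : Matrix n n ℂ} (hM : M.PosSemidef) (i : n) :
    0 ≤ M i i := by
  exact hM.diag_nonneg

lemma psd_trace_re_nonneg {M : Matrix n n ℂ} (hM : M.PosSemidef) :
    0 ≤ M.trace.re := by
  rw [Matrix.trace, Complex.re_sum]
  exact Finset.sum_nonneg fun i _ => (Complex.le_def.mp (psd_diag_nonneg hM i)).1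

lemma psd_smul {M : Matrix n n ℂ} (hM : M.PosSemidef) {c : ℝ} (hc : 0 ≤ c) :
    (c • M).PosSemidef := by
  exact hM.smul hc


lemma trace_conj_unitary (U : Matrix.unitaryGroup n ℂ) (M : Matrix n n ℂ) :
    ((U : Matrix n n ℂ) * M * star (U : Matrix n n ℂ)).trace = M.trace := by
  rw [Matrix.trace_mul_cycle, Matrix.UnitaryGroup.star_mul_self, one_mul]

lemma conj_unitary_mul (U : Matrix.unitaryGroup n ℂ) (M N : Matrix n n ℂ) :
    ((U : Matrix n n ℂ) * M * star (U : Matrix n n ℂ)) *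
      ((U : Matrix n n ℂ) * N * star (U : Matrix n n ℂ)) =
    (U : Matrix n n ℂ) * (M * N) * star (U : Matrix n n ℂ) := by
  have h : star (U : Matrix n n ℂ) * (U : Matrix n n ℂ) = 1 :=
    Matrix.UnitaryGroup.star_mul_self U
  calc ((U : Matrix n n ℂ) * M * star (U : Matrix n n ℂ)) *
      ((U : Matrix n n ℂ) * N * star (U : Matrix n n ℂ))
      = (U : Matrix n n ℂ) * M * (star (U : Matrix n n ℂ) * (U : Matrix n n ℂ)) * N *
        star (U : Matrix n n ℂ) := by noncomm_ring
    _ = (U : Matrix n n ℂ) * (M * N) * star (U : Matrix n n ℂ) := by rw [h]; noncomm_ring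

lemma conj_unitary_psd (U : Matrix.unitaryGroup n ℂ) {M : Matrix n n ℂ} (hM : M.PosSemidef) :
    ((U : Matrix n n ℂ) * M * star (U : Matrix n n ℂ)).PosSemidef := by
  have := hM.mul_mul_conjTranspose_same (U : Matrix n n ℂ)
  rwa [← Matrix.star_eq_conjTranspose] at this

open scoped MatrixOrder in
lemma traceNorm_eq_sum_abs_eigenvalues {A : Matrix n n ℂ} (hA : A.IsHermitian) :
    traceNorm A = ∑ i, |hA.eigenvalues i| := by
  have hcoe : (RCLike.ofReal : ℝ → ℂ) = Complex.ofReal := rfl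
  set U := hA.eigenvectorUnitary with hU
  set S : Matrix n n ℂ :=
    (U : Matrix n n ℂ) * Matrix.diagonal (Complex.ofReal ∘ fun i => |hA.eigenvalues i|) *
      star (U : Matrix n n ℂ) with hSdef
  have hSpsd : S.PosSemidef := conj_unitary_psd U (Matrix.PosSemidef.diagonal (by
    intro i
    simp only [Function.comp_apply]
    exact Complex.zero_le_real.mpr (abs_nonneg _)))
  have hAspec : A = (U : Matrix n n ℂ) * Matrix.diagonal (Complex.ofReal ∘ hA.eigenvalues) *
      star (U : Matrix n n ℂ) := hcoe ▸ hA.spectral_theorem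
  have hsq : S ^ 2 = Aᴴ * A := by
    rw [hA.eq, pow_two, hSdef, conj_unitary_mul]
    conv_rhs => rw [hAspec]
    rw [conj_unitary_mul]
    congr 2
    rw [Matrix.diagonal_mul_diagonal, Matrix.diagonal_mul_diagonal]
    refine congrArg Matrix.diagonal (funext fun i => ?_)
    simp only [Pi.mul_apply, Function.comp_apply, ← Complex.ofReal_mul]
    rw [← abs_mul, abs_mul_self]
  have hsqrt : S = CFC.sqrt (Aᴴ * A) :=
    (CFC.sqrt_unique (by rw [← pow_two]; exact hsq) hSpsd.nonneg).symm
  rw [traceNorm_eq_trace_sqrt, ← hsqrt, hSdef, trace_conj_unitary, Matrix.trace_diagonal]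
  rw [Complex.re_sum]
  simp

lemma jordan_decomp {A : Matrix n n ℂ} (hA : A.IsHermitian) :
    ∃ P Q : Matrix n n ℂ, P.PosSemidef ∧ Q.PosSemidef ∧ A = P - Q ∧
      traceNorm A = P.trace.re + Q.trace.re := by
  have hcoe : (RCLike.ofReal : ℝ → ℂ) = Complex.ofReal := rfl
  set U := hA.eigenvectorUnitary with hU
  refine ⟨(U : Matrix n n ℂ) * Matrix.diagonal (Complex.ofReal ∘ fun i => max (hA.eigenvalues i) 0) *
      star (U : Matrix n n ℂ),
    (U : Matrix n n ℂ) * Matrix.diagonal (Complex.ofReal ∘ fun i => max (-hA.eigenvalues i) 0) *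
      star (U : Matrix n n ℂ), ?_, ?_, ?_, ?_⟩
  · exact conj_unitary_psd U (Matrix.PosSemidef.diagonal (fun i =>
      Complex.zero_le_real.mpr (le_max_right _ _)))
  · exact conj_unitary_psd U (Matrix.PosSemidef.diagonal (fun i =>
      Complex.zero_le_real.mpr (le_max_right _ _)))
  · have hAspec : A = (U : Matrix n n ℂ) * Matrix.diagonal (Complex.ofReal ∘ hA.eigenvalues) *
        star (U : Matrix n n ℂ) := hcoe ▸ hA.spectral_theorem
    rw [← Matrix.sub_mul, ← Matrix.mul_sub, Matrix.diagonal_sub]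
    conv_lhs => rw [hAspec]
    congr 2
    refine congrArg Matrix.diagonal (funext fun i => ?_)
    simp only [Pi.sub_apply, Function.comp_apply, ← Complex.ofReal_sub]
    congr 1
    rcases le_total 0 (hA.eigenvalues i) with h | h
    · rw [max_eq_left h, max_eq_right (neg_nonpos.mpr h), sub_zero]
    · rw [max_eq_right h, max_eq_left (neg_nonneg.mpr h), zero_sub, neg_neg]
  · rw [traceNorm_eq_sum_abs_eigenvalues hA, trace_conj_unitary, trace_conj_unitary,
      Matrix.trace_diagonal, Matrix.trace_diagonal, Complex.re_sum, Complex.re_sum,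
      ← Finset.sum_add_distrib]
    refine Finset.sum_congr rfl fun i _ => ?_
    simp only [Function.comp_apply, Complex.ofReal_re]
    rw [← max_zero_add_max_neg_zero_eq_abs_self]

lemma trace_proj_mul_psd_bounds (U : Matrix.unitaryGroup n ℂ) (s : n → Prop) [DecidablePred s]
    {R : Matrix n n ℂ} (hR : R.PosSemidef) :
    0 ≤ (((U : Matrix n n ℂ) * Matrix.diagonal (fun i => if s i then (1:ℂ) else 0) *
        star (U : Matrix n n ℂ)) * R).trace.re ∧
      (((U : Matrix n n ℂ) * Matrix.diagonal (fun i => if s i then (1:ℂ) else 0) *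
        star (U : Matrix n n ℂ)) * R).trace.re ≤ R.trace.re := by
  set E : Matrix n n ℂ := Matrix.diagonal (fun i => if s i then (1:ℂ) else 0) with hE
  set B : Matrix n n ℂ := star (U : Matrix n n ℂ) * R * (U : Matrix n n ℂ) with hB
  have hBpsd : B.PosSemidef := by
    have := hR.conjTranspose_mul_mul_same (U : Matrix n n ℂ)
    rwa [← Matrix.star_eq_conjTranspose] at this
  have htrB : B.trace = R.trace := by
    rw [hB, Matrix.trace_mul_cycle, Matrix.mem_unitaryGroup_iff.mp U.2, one_mul]
  have key : (((U : Matrix n n ℂ) * E * star (U : Matrix n n ℂ)) * R).trace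
      = ∑ i, (if s i then (1:ℂ) else 0) * B i i := by
    rw [show ((U : Matrix n n ℂ) * E * star (U : Matrix n n ℂ)) * R
        = (U : Matrix n n ℂ) * (E * (star (U : Matrix n n ℂ) * R)) by noncomm_ring,
      Matrix.trace_mul_comm,
      show (E * (star (U : Matrix n n ℂ) * R)) * (U : Matrix n n ℂ) = E * B by
        rw [hB]; noncomm_ring]
    rw [Matrix.trace]
    refine Finset.sum_congr rfl fun i _ => ?_
    rw [Matrix.diag_apply, hE, Matrix.diagonal_mul]
  have hre : (((U : Matrix n n ℂ) * E * star (U : Matrix n n ℂ)) * R).trace.re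
      = ∑ i, if s i then (B i i).re else 0 := by
    rw [key, Complex.re_sum]
    refine Finset.sum_congr rfl fun i _ => ?_
    rw [ite_mul, one_mul, zero_mul, apply_ite Complex.re, Complex.zero_re]
  constructor
  · rw [hre]
    refine Finset.sum_nonneg fun i _ => ?_
    by_cases h : s i
    · simpa [h] using (Complex.le_def.mp (psd_diag_nonneg hBpsd i)).1
    · simp [h]
  · rw [hre]
    have : R.trace.re = ∑ i, (B i i).re := by
      rw [← htrB, Matrix.trace, Complex.re_sum]; rfl
    rw [this]
    refine Finset.sum_le_sum fun i _ => ?_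
    by_cases h : s i
    · simp [h]
    · simpa [h] using (Complex.le_def.mp (psd_diag_nonneg hBpsd i)).1

lemma trace_proj_mul_hermitian {A : Matrix n n ℂ} (hA : A.IsHermitian)
    (s : n → Prop) [DecidablePred s] :
    (((hA.eigenvectorUnitary : Matrix n n ℂ) *
        Matrix.diagonal (fun i => if s i then (1:ℂ) else 0) *
        star (hA.eigenvectorUnitary : Matrix n n ℂ)) * A).trace.re
      = ∑ i, if s i then hA.eigenvalues i else 0 := by
  have hcoe : (RCLike.ofReal : ℝ → ℂ) = Complex.ofReal := rfl
  set U := hA.eigenvectorUnitary with hU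
  have hAspec : A = (U : Matrix n n ℂ) * Matrix.diagonal (Complex.ofReal ∘ hA.eigenvalues) *
      star (U : Matrix n n ℂ) := hcoe ▸ hA.spectral_theorem
  conv_lhs => rw [hAspec]
  rw [conj_unitary_mul, trace_conj_unitary, Matrix.diagonal_mul_diagonal,
    Matrix.trace_diagonal, Complex.re_sum]
  refine Finset.sum_congr rfl fun i _ => ?_
  rw [ite_mul, one_mul, zero_mul, apply_ite Complex.re]
  simp

lemma traceNorm_sub_le {P Q : Matrix n n ℂ} (hP : P.PosSemidef) (hQ : Q.PosSemidef) :
    traceNorm (P - Q) ≤ P.trace.re + Q.trace.re := by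
  classical
  have hA : (P - Q).IsHermitian := hP.isHermitian.sub hQ.isHermitian
  rw [traceNorm_eq_sum_abs_eigenvalues hA]
  set U := hA.eigenvectorUnitary with hU
  set sp : n → Prop := fun i => 0 ≤ hA.eigenvalues i with hsp
  set sm : n → Prop := fun i => hA.eigenvalues i < 0 with hsm
  have habs : ∑ i, |hA.eigenvalues i|
      = (∑ i, if sp i then hA.eigenvalues i else 0) -
        (∑ i, if sm i then hA.eigenvalues i else 0) := by
    rw [← Finset.sum_sub_distrib]
    refine Finset.sum_congr rfl fun i _ => ?_
    by_cases h : 0 ≤ hA.eigenvalues i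
    · rw [if_pos h, if_neg (not_lt.mpr h), sub_zero, abs_of_nonneg h]
    · rw [if_neg h, if_pos (lt_of_not_ge h), zero_sub, abs_of_neg (lt_of_not_ge h)]
  have hsplit : ∀ (s : n → Prop) (_ : DecidablePred s),
      (((U : Matrix n n ℂ) * Matrix.diagonal (fun i => if s i then (1:ℂ) else 0) *
        star (U : Matrix n n ℂ)) * (P - Q)).trace.re
      = (((U : Matrix n n ℂ) * Matrix.diagonal (fun i => if s i then (1:ℂ) else 0) *
        star (U : Matrix n n ℂ)) * P).trace.re -
        (((U : Matrix n n ℂ) * Matrix.diagonal (fun i => if s i then (1:ℂ) else 0) *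
        star (U : Matrix n n ℂ)) * Q).trace.re := by
    intro s _
    rw [Matrix.mul_sub, Matrix.trace_sub, Complex.sub_re]
  rw [habs, ← trace_proj_mul_hermitian hA sp, ← trace_proj_mul_hermitian hA sm,
    hsplit sp inferInstance, hsplit sm inferInstance]
  have h1 := trace_proj_mul_psd_bounds U sp hP
  have h2 := trace_proj_mul_psd_bounds U sp hQ
  have h3 := trace_proj_mul_psd_bounds U sm hP
  have h4 := trace_proj_mul_psd_bounds U sm hQ
  linarith [h1.1, h1.2, h2.1, h2.2, h3.1, h3.2, h4.1, h4.2]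

lemma traceNorm_zero : traceNorm (0 : Matrix n n ℂ) = 0 := by
  rw [traceNorm_eq_trace_sqrt]
  simp

open scoped MatrixOrder in
lemma traceNorm_nonneg (A : Matrix n n ℂ) : 0 ≤ traceNorm A := by
  rw [traceNorm_eq_trace_sqrt]
  exact psd_trace_re_nonneg (CFC.sqrt_nonneg _).posSemidef

end MatrixHelpers

section KeyLemmas
variable {L : ℕ}

set_option linter.unusedSectionVars false

lemma eq_botKey_of_len_zero {k : Key L} (h : lenKey k = 0) : k = botKey L := by
  obtain ⟨l, s⟩ := k
  have hl : l = 0 := h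
  subst hl
  have hs : s = fun _ => false := funext fun i => absurd i.isLt (by simp)
  rw [botKey, hs]

lemma lenKey_botKey : lenKey (botKey L) = 0 := rfl

lemma idealWt_nonneg (kA kB : Key L) : 0 ≤ idealWt kA kB := by
  unfold idealWt
  split_ifs <;> positivity

lemma idealWt_botKey_botKey : idealWt (botKey L) (botKey L) = (1:ℝ) := by
  unfold idealWt
  rw [if_pos rfl, if_pos rfl]
  norm_num [lenKey, botKey]

variable {C d : Type*} [Fintype C] [Fintype d] [DecidableEq d]

lemma idealMap_psd {ρ : Key L × Key L × C → Matrix d d ℂ}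
    (hρ : ∀ p, (ρ p).PosSemidef) (p : Key L × Key L × C) :
    (idealMap ρ p).PosSemidef := by
  unfold idealMap
  refine psd_smul ?_ (idealWt_nonneg _ _)
  refine Finset.sum_induction _ _ (fun a b ha hb => ha.add hb) Matrix.PosSemidef.zero
    (fun q _ => ?_)
  split_ifs
  · exact hρ _
  · exact Matrix.PosSemidef.zero

lemma idealMap_ite_mem (Ω : Set C) [DecidablePred (· ∈ Ω)]
    (ρ : Key L × Key L × C → Matrix d d ℂ) (p : Key L × Key L × C) :
    idealMap (fun r => if r.2.2 ∈ Ω then ρ r else 0) p =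
      if p.2.2 ∈ Ω then idealMap ρ p else 0 := by
  by_cases h : p.2.2 ∈ Ω <;> simp [idealMap, h]

lemma idealMap_ite_not_mem (Ω : Set C) [DecidablePred (· ∈ Ω)]
    (ρ : Key L × Key L × C → Matrix d d ℂ) (p : Key L × Key L × C) :
    idealMap (fun r => if r.2.2 ∈ Ω then 0 else ρ r) p =
      if p.2.2 ∈ Ω then 0 else idealMap ρ p := by
  by_cases h : p.2.2 ∈ Ω <;> simp [idealMap, h]

end KeyLemmas

lemma sum_triple {K C : Type*} [Fintype K] [Fintype C] (f : K × K × C → ℝ) :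
    ∑ p : K × K × C, f p = ∑ q : K × K, ∑ c : C, f (q.1, q.2, c) := by
  rw [Fintype.sum_prod_type, Fintype.sum_prod_type]
  exact Finset.sum_congr rfl fun a _ => by rw [Fintype.sum_prod_type]

/-- State-level form of the reduction corollary: for an authentication post-processing
channel `N` that is positive and total-trace-preserving, commutes with the ideal map,
is transcript-local, and forces both parties to abort whenever the transcript lies
outside the honest-authentication event `Ω`, the final real–ideal trace distance is
bounded by the pre-processing real–ideal trace distance restricted to `Ω`, which in
turn is at most the full pre-processing real–ideal trace distance. -/
theorem app_channel_traceDist_le (L : ℕ) (C C' d d' : Type*)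
    [Fintype C] [Fintype C'] [Fintype d] [DecidableEq d] [Fintype d'] [DecidableEq d']
    (Ω : Set C) [DecidablePred (· ∈ Ω)]
    (ρ : Key L × Key L × C → Matrix d d ℂ)
    (hρ : ∀ p, (ρ p).PosSemidef)
    (N : (Key L × Key L × C → Matrix d d ℂ) →ₗ[ℂ]
          (Key L × Key L × (C × C') → Matrix d' d' ℂ))
    (hpos : ∀ σ : Key L × Key L × C → Matrix d d ℂ,
        (∀ p, (σ p).PosSemidef) → ∀ p, ((N σ) p).PosSemidef)
    (htr : ∀ σ : Key L × Key L × C → Matrix d d ℂ,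
        ∑ p : Key L × Key L × (C × C'), ((N σ) p).trace =
          ∑ p : Key L × Key L × C, (σ p).trace)
    (hcomm : ∀ σ : Key L × Key L × C → Matrix d d ℂ,
        N (idealMap σ) = idealMap (N σ))
    (hlocal : ∀ c : C, ∃ Nc : (Key L × Key L → Matrix d d ℂ) →ₗ[ℂ]
          (Key L × Key L × C' → Matrix d' d' ℂ),
        ∀ (σ : Key L × Key L × C → Matrix d d ℂ) (kA' kB' : Key L) (c' : C'),
          (N σ) (kA', kB', (c, c')) = Nc (fun q => σ (q.1, q.2, c)) (kA', kB', c'))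
    (habort : ∀ σ : Key L × Key L × C → Matrix d d ℂ,
        (∀ p, (σ p).PosSemidef) → ∀ c : C, c ∉ Ω → ∀ (c' : C') (kA' kB' : Key L),
          (kA', kB') ≠ (botKey L, botKey L) → (N σ) (kA', kB', (c, c')) = 0) :
    (∑ p : Key L × Key L × (C × C'), traceNorm ((N ρ) p - idealMap (N ρ) p) ≤
      ∑ q : Key L × Key L, ∑ c ∈ Finset.univ.filter (· ∈ Ω),
        traceNorm (ρ (q.1, q.2, c) - idealMap ρ (q.1, q.2, c))) ∧
    (∑ q : Key L × Key L, ∑ c ∈ Finset.univ.filter (· ∈ Ω),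
        traceNorm (ρ (q.1, q.2, c) - idealMap ρ (q.1, q.2, c)) ≤
      ∑ p : Key L × Key L × C, traceNorm (ρ p - idealMap ρ p)) := by
  classical
  have hsum3 := sum_triple (K := Key L) (C := C)
  -- the difference family restricted to Ω and its complement
  set σΩ : Key L × Key L × C → Matrix d d ℂ :=
    fun p => if p.2.2 ∈ Ω then ρ p - idealMap ρ p else 0 with hσΩ
  set σΩc : Key L × Key L × C → Matrix d d ℂ :=
    fun p => if p.2.2 ∈ Ω then 0 else ρ p - idealMap ρ p with hσΩc
  set ρΩc : Key L × Key L × C → Matrix d d ℂ :=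
    fun p => if p.2.2 ∈ Ω then 0 else ρ p with hρΩc
  have hρΩc_psd : ∀ p, (ρΩc p).PosSemidef := by
    intro p
    simp only [hρΩc]
    split_ifs
    · exact Matrix.PosSemidef.zero
    · exact hρ p
  have hσΩc_eq : σΩc = ρΩc - idealMap ρΩc := by
    funext p
    simp only [Pi.sub_apply, hσΩc, hρΩc]
    rw [idealMap_ite_not_mem]
    by_cases h : p.2.2 ∈ Ω <;> simp [h]
  -- N kills the complement part
  have hNσΩc : N σΩc = 0 := by
    have hNρΩc_zero_of_mem : ∀ (kA' kB' : Key L) (c : C), c ∈ Ω → ∀ c' : C',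
        N ρΩc (kA', kB', (c, c')) = 0 := by
      intro kA' kB' c hc c'
      obtain ⟨Nc, hNc⟩ := hlocal c
      rw [hNc]
      have h0 : (fun q : Key L × Key L => ρΩc (q.1, q.2, c)) = 0 := by
        funext q
        simp [hρΩc, hc]
      rw [h0, map_zero]
      rfl
    have hNρΩc_zero_abort : ∀ (kA' kB' : Key L) (c : C), c ∉ Ω →
        (kA', kB') ≠ (botKey L, botKey L) → ∀ c' : C',
        N ρΩc (kA', kB', (c, c')) = 0 := fun kA' kB' c hc hne c' =>
      habort ρΩc hρΩc_psd c hc c' kA' kB' hne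
    rw [hσΩc_eq, map_sub, hcomm]
    funext p
    obtain ⟨kA', kB', c, c'⟩ := p
    rw [Pi.sub_apply, Pi.zero_apply, sub_eq_zero]
    by_cases hc : c ∈ Ω
    · rw [hNρΩc_zero_of_mem kA' kB' c hc c']
      unfold idealMap
      rw [show (∑ q : Key L × Key L,
          if lenKey q.1 = lenKey kA' ∧ lenKey q.2 = lenKey kB'
            then N ρΩc (q.1, q.2, (c, c')) else 0) = 0 from
        Finset.sum_eq_zero fun q _ => by
          rw [hNρΩc_zero_of_mem q.1 q.2 c hc c']; simp, smul_zero]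
    · by_cases hk : (kA', kB') = (botKey L, botKey L)
      · rw [Prod.mk.injEq] at hk
        obtain ⟨hk1, hk2⟩ := hk
        subst hk1; subst hk2
        unfold idealMap
        rw [Finset.sum_eq_single_of_mem (botKey L, botKey L) (Finset.mem_univ _)
          (fun q _ hq => by
            rw [if_neg]
            intro ⟨h1, h2⟩
            exact hq (Prod.ext (eq_botKey_of_len_zero h1) (eq_botKey_of_len_zero h2)))]
        rw [if_pos ⟨rfl, rfl⟩]
        rw [show idealWt (botKey L) (botKey L) = (1:ℝ) from idealWt_botKey_botKey, one_smul]
      · rw [hNρΩc_zero_abort kA' kB' c hc hk c']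
        unfold idealMap
        rw [show (∑ q : Key L × Key L,
            if lenKey q.1 = lenKey kA' ∧ lenKey q.2 = lenKey kB'
              then N ρΩc (q.1, q.2, (c, c')) else 0) = 0 from
          Finset.sum_eq_zero fun q _ => by
            split_ifs with hcond
            · refine hNρΩc_zero_abort q.1 q.2 c hc ?_ c'
              intro hq
              rw [Prod.mk.injEq] at hq
              refine hk ?_
              rw [Prod.mk.injEq]
              constructor
              · refine eq_botKey_of_len_zero ?_
                rw [← hcond.1, hq.1]; rfl
              · refine eq_botKey_of_len_zero ?_
                rw [← hcond.2, hq.2]; rfl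
            · rfl, smul_zero]
  -- the pointwise identity for the final state
  have hfinal : ∀ p : Key L × Key L × (C × C'),
      N ρ p - idealMap (N ρ) p = N σΩ p := by
    intro p
    have hsplit : ρ - idealMap ρ = σΩ + σΩc := by
      funext r
      simp only [Pi.add_apply, Pi.sub_apply, hσΩ, hσΩc]
      by_cases h : r.2.2 ∈ Ω <;> simp [h]
    calc N ρ p - idealMap (N ρ) p = N ρ p - N (idealMap ρ) p := by rw [hcomm]
    _ = N (ρ - idealMap ρ) p := by rw [map_sub]; rfl
    _ = N σΩ p + N σΩc p := by rw [hsplit, map_add]; rfl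
    _ = N σΩ p := by rw [hNσΩc]; simp
  -- σΩ entries are Hermitian
  have hσΩherm : ∀ p, (σΩ p).IsHermitian := by
    intro p
    simp only [hσΩ]
    split_ifs
    · exact ((hρ p).isHermitian).sub (idealMap_psd hρ p).isHermitian
    · exact Matrix.isHermitian_zero
  -- Jordan decomposition of σΩ
  choose Pf Qf hPf hQf hPQ hnrm using fun p => jordan_decomp (hσΩherm p)
  have hσΩPQ : σΩ = Pf - Qf := funext fun p => hPQ p
  constructor
  · -- main contraction bound
    have step1 : ∑ p : Key L × Key L × (C × C'),
        traceNorm (N ρ p - idealMap (N ρ) p)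
        = ∑ p : Key L × Key L × (C × C'), traceNorm (N σΩ p) :=
      Finset.sum_congr rfl fun p _ => by rw [hfinal p]
    have step2 : ∑ p : Key L × Key L × (C × C'), traceNorm (N σΩ p)
        ≤ ∑ p : Key L × Key L × (C × C'),
            (((N Pf) p).trace.re + ((N Qf) p).trace.re) := by
      refine Finset.sum_le_sum fun p _ => ?_
      have : N σΩ p = N Pf p - N Qf p := by rw [hσΩPQ, map_sub]; rfl
      rw [this]
      exact traceNorm_sub_le (hpos Pf hPf p) (hpos Qf hQf p)
    have step3 : ∑ p : Key L × Key L × (C × C'),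
          (((N Pf) p).trace.re + ((N Qf) p).trace.re)
        = ∑ p : Key L × Key L × C, traceNorm (σΩ p) := by
      rw [Finset.sum_add_distrib, ← Complex.re_sum, ← Complex.re_sum, htr Pf, htr Qf,
        Complex.re_sum, Complex.re_sum, ← Finset.sum_add_distrib]
      exact Finset.sum_congr rfl fun p _ => (hnrm p).symm
    have step4 : ∑ p : Key L × Key L × C, traceNorm (σΩ p)
        = ∑ q : Key L × Key L, ∑ c ∈ Finset.univ.filter (· ∈ Ω),
            traceNorm (ρ (q.1, q.2, c) - idealMap ρ (q.1, q.2, c)) := by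
      rw [hsum3]
      refine Finset.sum_congr rfl fun q _ => ?_
      rw [Finset.sum_filter]
      refine Finset.sum_congr rfl fun c _ => ?_
      simp only [hσΩ]
      by_cases h : c ∈ Ω
      · simp only [h, if_true]
      · simp only [h, if_false, traceNorm_zero]
    rw [step1, ← step4]
    exact le_trans step2 (le_of_eq step3)
  · -- trivial monotonicity bound
    rw [hsum3]
    refine Finset.sum_le_sum fun q _ => ?_
    refine Finset.sum_le_sum_of_subset_of_nonneg (Finset.filter_subset _ _)
      fun c _ _ => traceNorm_nonneg _
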